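/- Suppose k, n, m are positive integers with k ≥ 150, n − m ≥ 2, a1, a2 ∈ {1,…,9}, and Q_k = a1·(10^n−1)/9 − a2·(10^m−1)/9. Then 2n < k + 5; in particular n < k + 2. -/

import Mathlib

/-- The Pell-Lucas sequence: `Q 0 = Q 1 = 2`, `Q (n+2) = 2 * Q (n+1) + Q n`. -/
def pellLucas : ℕ → ℕ
  | 0 => 2
  | 1 => 2
  | n + 2 => 2 * pellLucas (n + 1) + pellLucas n

lemma pellLucas_le_aux : ∀ k, pellLucas (k+1) ≤ 3^(k+1) ∧ pellLucas (k+2) ≤ 3^(k+2) := by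
  intro k
  induction k with
  | zero => constructor <;> simp [pellLucas]
  | succ k ih =>
    obtain ⟨h1, h2⟩ := ih
    refine ⟨h2, ?_⟩
    show 2 * pellLucas (k+2) + pellLucas (k+1) ≤ 3^(k+3)
    have e1 : (3:ℕ)^(k+3) = 3 * 3^(k+2) := by ring
    have e2 : (3:ℕ)^(k+2) = 3 * 3^(k+1) := by ring
    omega

lemma pellLucas_le (k : ℕ) (hk : 1 ≤ k) : pellLucas k ≤ 3^k := by
  obtain ⟨j, rfl⟩ := Nat.exists_eq_add_of_le hk
  simpa [Nat.add_comm] using (pellLucas_le_aux j).1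

/-- Under the hypotheses of the Pell-Lucas equation, `2 n < k + 5`;
in particular `n < k + 2`. -/
theorem pellLucas_two_n_lt (k n m a1 a2 : ℕ) (hk : 150 ≤ k) (hnm : m + 2 ≤ n) (hm : 1 ≤ m)
    (ha11 : 1 ≤ a1) (ha19 : a1 ≤ 9) (ha21 : 1 ≤ a2) (ha29 : a2 ≤ 9)
    (heq : (pellLucas k : ℤ) = (a1 : ℤ) * ((10 ^ n - 1) / 9) - (a2 : ℤ) * ((10 ^ m - 1) / 9)) :
    2 * n < k + 5 ∧ n < k + 2 := by
  -- write n = j + 2 with m ≤ j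
  obtain ⟨t, rfl⟩ := Nat.exists_eq_add_of_le hnm
  set j := m + t with hj
  have hn2 : m + 2 + t = j + 2 := by omega
  rw [hn2] at heq ⊢
  have hmj : m ≤ j := by omega
  -- divisibility
  have hd : ∀ s : ℕ, (9:ℤ) ∣ 10 ^ s - 1 := by
    intro s
    have := sub_dvd_pow_sub_pow (10:ℤ) 1 s
    simpa using this
  have h9n : (9:ℤ) * ((10 ^ (j+2) - 1) / 9) = 10 ^ (j+2) - 1 := Int.mul_ediv_cancel' (hd _)
  have h9m : (9:ℤ) * ((10 ^ m - 1) / 9) = 10 ^ m - 1 := Int.mul_ediv_cancel' (hd _)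
  have heq9 : 9 * (pellLucas k : ℤ) = (a1:ℤ) * (10 ^ (j+2) - 1) - (a2:ℤ) * (10 ^ m - 1) := by
    have := congrArg (fun x => 9 * x) heq
    rw [this]; ring_nf
    ring_nf at h9n h9m
    rw [mul_comm] at h9n h9m
    nlinarith [h9n, h9m]
  -- lower bound: 9 * Q_k > 9 * 10^(j+1)
  have hpm : (10:ℤ) ^ m ≤ 10 ^ j := pow_le_pow_right₀ (by norm_num) hmj
  have ha1' : (1:ℤ) ≤ a1 := by exact_mod_cast ha11
  have ha2' : (a2:ℤ) ≤ 9 := by exact_mod_cast ha29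
  have hpow_pos : (1:ℤ) ≤ 10 ^ (j+2) := one_le_pow₀ (by norm_num)
  have hlow : 9 * (10:ℤ) ^ (j+1) < 9 * (pellLucas k : ℤ) := by
    have h1 : (10:ℤ) ^ (j+2) - 1 ≤ (a1:ℤ) * (10 ^ (j+2) - 1) := by
      nlinarith [hpow_pos]
    have h2 : (a2:ℤ) * (10 ^ m - 1) ≤ 9 * (10 ^ j - 1) := by
      have hpm1 : (1:ℤ) ≤ 10 ^ m := one_le_pow₀ (by norm_num)
      nlinarith
    have h3 : (10:ℤ)^(j+2) = 100 * 10^j := by ring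
    have h4 : (10:ℤ)^(j+1) = 10 * 10^j := by ring
    omega
  have hQlow : (10:ℤ) ^ (j+1) < (pellLucas k : ℤ) := by omega
  -- upper bound
  have hQup : pellLucas k ≤ 3 ^ k := pellLucas_le k (by omega)
  have hQlowN : 10 ^ (j+1) < pellLucas k := by exact_mod_cast hQlow
  have hkey : 10 ^ (2*(j+1)) < 10 ^ k := by
    calc 10 ^ (2*(j+1)) = 10^(j+1) * 10^(j+1) := by ring
    _ < (3^k) * (3^k) := by
        apply Nat.mul_lt_mul_of_lt_of_lt <;> omega
    _ = 9 ^ k := by rw [← Nat.mul_pow]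
    _ < 10 ^ k := Nat.pow_lt_pow_left (by norm_num) (by omega)
  have : 2*(j+1) < k := by
    exact (Nat.pow_lt_pow_iff_right (by norm_num)).mp hkey
  omega
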